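/- Let d ≥ 1, let Ω ⊆ ℝ^d be a bounded measurable set, let ρ : ℝ^d → ℝ be a nonnegative integrable function with associated measure π(A) = ∫_A ρ(x) dx, let dist : ℝ^d × ℝ^d → ℝ be a continuous nonnegative function, let y_1, …, y_K ∈ ℝ^d, and let c ∈ ℝ^K. For w ∈ ℝ^K define the tie-broken power cells V_k(w) = {x ∈ Ω : dist(x,y_k) − w_k ≤ dist(x,y_j) − w_j for all j, with strict inequality for all j < k}, and define F(w) = Σ_{k=1}^K ∫_{V_k(w)} dist(x,y_k) ρ(x) dx − Σ_{k=1}^K w_k (π(V_k(w)) − c_k). Then F is a concave function of w on ℝ^K. -/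
import Mathlib


open MeasureTheory

/-- The tie-broken power cell of the generator `y k` with weight `w k` in `Ω`: points of `Ω`
where `dst x (y k) - w k` is minimal among all generators, with ties assigned to the
smallest index. -/
def powerCell {d K : ℕ} (Ω : Set (EuclideanSpace ℝ (Fin d)))
    (dst : EuclideanSpace ℝ (Fin d) → EuclideanSpace ℝ (Fin d) → ℝ)
    (y : Fin K → EuclideanSpace ℝ (Fin d)) (w : Fin K → ℝ) (k : Fin K) :
    Set (EuclideanSpace ℝ (Fin d)) :=
  {x ∈ Ω | (∀ j, dst x (y k) - w k ≤ dst x (y j) - w j) ∧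
    ∀ j, j < k → dst x (y k) - w k < dst x (y j) - w j}

theorem stmt_15 (d K : ℕ) (hd : 1 ≤ d) (hK : 0 < K)
    (Ω : Set (EuclideanSpace ℝ (Fin d)))
    (hΩb : Bornology.IsBounded Ω) (hΩm : MeasurableSet Ω)
    (ρ : EuclideanSpace ℝ (Fin d) → ℝ) (hρ0 : ∀ x, 0 ≤ ρ x) (hρi : Integrable ρ)
    (dst : EuclideanSpace ℝ (Fin d) → EuclideanSpace ℝ (Fin d) → ℝ)
    (hdstc : Continuous fun p : EuclideanSpace ℝ (Fin d) × EuclideanSpace ℝ (Fin d) => dst p.1 p.2)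
    (hdst0 : ∀ x y, 0 ≤ dst x y)
    (y : Fin K → EuclideanSpace ℝ (Fin d)) (c : Fin K → ℝ) :
    ConcaveOn ℝ Set.univ (fun w : Fin K → ℝ =>
      (∑ k, ∫ x in powerCell Ω dst y w k, dst x (y k) * ρ x)
      - ∑ k, w k * ((∫ x in powerCell Ω dst y w k, ρ x) - c k)) := by
  classical
  have hne : Nonempty (Fin K) := ⟨⟨0, hK⟩⟩
  have hN : (Finset.univ : Finset (Fin K)).Nonempty := Finset.univ_nonempty
  have hcont : ∀ j, Continuous fun x : EuclideanSpace ℝ (Fin d) => dst x (y j) := fun j => by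
    exact hdstc.comp (continuous_id.prodMk continuous_const)
  -- the min function
  set m : (Fin K → ℝ) →  EuclideanSpace ℝ (Fin d) → ℝ :=
    fun w x => Finset.univ.inf' hN (fun j => dst x (y j) - w j) with hm
  have hmcont : ∀ w, Continuous (m w) := by
    intro w
    exact Continuous.finset_inf'_apply hN fun j _ => (hcont j).sub continuous_const
  -- integrability of continuous functions times ρ on Ω
  have hint : ∀ g :  EuclideanSpace ℝ (Fin d) → ℝ, Continuous g → IntegrableOn (fun x => g x * ρ x) Ω := by
    intro g hg
    obtain ⟨C, hC⟩ := hΩb.isCompact_closure.exists_bound_of_continuousOn hg.continuousOn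
    have hCmul : IntegrableOn (fun x => C * ρ x) Ω := (hρi.const_mul C).integrableOn
    refine Integrable.mono hCmul
      ((hg.aestronglyMeasurable.mul hρi.aestronglyMeasurable).restrict) ?_
    filter_upwards [ae_restrict_mem hΩm] with x hx
    have h1 : ‖g x‖ ≤ C := hC x (subset_closure hx)
    rw [norm_mul, norm_mul]
    have : C ≤ ‖C‖ := le_abs_self C
    calc ‖g x‖ * ‖ρ x‖ ≤ C * ‖ρ x‖ := by
          exact mul_le_mul_of_nonneg_right h1 (norm_nonneg _)
      _ ≤ ‖C‖ * ‖ρ x‖ := mul_le_mul_of_nonneg_right this (norm_nonneg _)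
  -- measurability of the cells
  have hmeas : ∀ w k, MeasurableSet (powerCell Ω dst y w k) := by
    intro w k
    have h1 : MeasurableSet {x : EuclideanSpace ℝ (Fin d) | ∀ j, dst x (y k) - w k ≤ dst x (y j) - w j} := by
      rw [Set.setOf_forall]
      exact MeasurableSet.iInter fun j =>
        measurableSet_le ((hcont k).sub continuous_const).measurable
          ((hcont j).sub continuous_const).measurable
    have h2 : MeasurableSet {x : EuclideanSpace ℝ (Fin d) | ∀ j, j < k → dst x (y k) - w k < dst x (y j) - w j} := by
      rw [Set.setOf_forall]
      refine MeasurableSet.iInter fun j => ?_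
      by_cases hj : j < k
      · simp only [hj, true_implies]
        exact measurableSet_lt ((hcont k).sub continuous_const).measurable
          ((hcont j).sub continuous_const).measurable
      · simp [hj]
    have : powerCell Ω dst y w k = Ω ∩ ({x : EuclideanSpace ℝ (Fin d) | ∀ j, dst x (y k) - w k ≤ dst x (y j) - w j}
        ∩ {x : EuclideanSpace ℝ (Fin d) | ∀ j, j < k → dst x (y k) - w k < dst x (y j) - w j}) := by
      ext x
      simp only [powerCell, Set.mem_setOf_eq, Set.mem_inter_iff]
    rw [this]
    exact hΩm.inter (h1.inter h2)
  have hsub : ∀ w k, powerCell Ω dst y w k ⊆ Ω := fun w k x hx => hx.1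
  -- the cells partition Ω
  have hUnion : ∀ w, (⋃ k, powerCell Ω dst y w k) = Ω := by
    intro w
    apply Set.Subset.antisymm (Set.iUnion_subset fun k => hsub w k)
    intro x hx
    set f : Fin K → ℝ := fun j => dst x (y j) - w j with hf
    set T : Finset (Fin K) := Finset.univ.filter (fun j => ∀ i, f j ≤ f i) with hT
    have hTne : T.Nonempty := by
      obtain ⟨j, _, hj⟩ := Finset.exists_min_image Finset.univ f hN
      exact ⟨j, by simp [hT]; exact fun i => hj i (Finset.mem_univ i)⟩
    set k := T.min' hTne with hk
    have hkT : k ∈ T := T.min'_mem hTne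
    have hkmin : ∀ i, f k ≤ f i := by
      have := Finset.mem_filter.mp hkT; exact this.2
    refine Set.mem_iUnion.mpr ⟨k, hx, hkmin, ?_⟩
    intro j hj
    by_contra hle
    push_neg at hle
    have hjT : j ∈ T := by
      refine Finset.mem_filter.mpr ⟨Finset.mem_univ j, fun i => ?_⟩
      exact le_trans hle (hkmin i)
    exact absurd (T.min'_le j hjT) (not_le.mpr hj)
  have hdisj : ∀ w, Set.Pairwise (↑(Finset.univ : Finset (Fin K)))
      (Function.onFun Disjoint fun k => powerCell Ω dst y w k) := by
    intro w k _ l _ hkl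
    rw [Function.onFun, Set.disjoint_left]
    intro x hxk hxl
    rcases hkl.lt_or_gt with h | h
    · exact absurd (hxk.2.1 l) (not_le.mpr (hxl.2.2 k h))
    · exact absurd (hxl.2.1 k) (not_le.mpr (hxk.2.2 l h))
  have hval : ∀ w k x, x ∈ powerCell Ω dst y w k → m w x = dst x (y k) - w k := by
    intro w k x hx
    refine le_antisymm (Finset.inf'_le _ (Finset.mem_univ k)) ?_
    exact Finset.le_inf' hN _ fun j _ => hx.2.1 j
  -- key identity
  have key : ∀ w : Fin K → ℝ,
      ((∑ k, ∫ x in powerCell Ω dst y w k, dst x (y k) * ρ x)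
        - ∑ k, w k * ((∫ x in powerCell Ω dst y w k, ρ x) - c k))
      = (∫ x in Ω, m w x * ρ x) + ∑ k, w k * c k := by
    intro w
    have h1 : ∀ k, (∫ x in powerCell Ω dst y w k, dst x (y k) * ρ x)
        - w k * (∫ x in powerCell Ω dst y w k, ρ x)
        = ∫ x in powerCell Ω dst y w k, m w x * ρ x := by
      intro k
      have ha : IntegrableOn (fun x => dst x (y k) * ρ x) (powerCell Ω dst y w k) :=
        (hint _ (hcont k)).mono_set (hsub w k)
      have hb : IntegrableOn ρ (powerCell Ω dst y w k) := hρi.integrableOn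
      rw [← integral_const_mul, ← integral_sub ha (hb.const_mul (w k))]
      refine setIntegral_congr_fun (hmeas w k) fun x hx => ?_
      rw [hval w k x hx]; ring
    have h2 : (∑ k, ∫ x in powerCell Ω dst y w k, m w x * ρ x)
        = ∫ x in Ω, m w x * ρ x := by
      rw [← integral_biUnion_finset Finset.univ (fun k _ => hmeas w k) (hdisj w)
        (fun k _ => ((hint _ (hmcont w)).mono_set (hsub w k)))]
      congr 1
      rw [show (⋃ i ∈ (Finset.univ : Finset (Fin K)), powerCell Ω dst y w i)
          = ⋃ i, powerCell Ω dst y w i by simp, hUnion w]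
    rw [← h2, ← Finset.sum_congr rfl fun k _ => h1 k]
    simp only [mul_sub, Finset.sum_sub_distrib]
    ring
  -- rewrite the function
  have hfun : (fun w : Fin K → ℝ =>
      (∑ k, ∫ x in powerCell Ω dst y w k, dst x (y k) * ρ x)
      - ∑ k, w k * ((∫ x in powerCell Ω dst y w k, ρ x) - c k))
      = fun w => (∫ x in Ω, m w x * ρ x) + ∑ k, w k * c k := funext key
  rw [hfun]
  -- concavity of the right-hand side
  refine ⟨convex_univ, ?_⟩
  intro w _ v _ a b ha hb hab
  simp only [smul_eq_mul]
  have hlin : ∑ k, (a • w + b • v) k * c k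
      = a * ∑ k, w k * c k + b * ∑ k, v k * c k := by
    simp only [Pi.add_apply, Pi.smul_apply, smul_eq_mul, Finset.mul_sum,
      ← Finset.sum_add_distrib]
    exact Finset.sum_congr rfl fun k _ => by ring
  have hpt : ∀ x : EuclideanSpace ℝ (Fin d), a * m w x + b * m v x ≤ m (a • w + b • v) x := by
    intro x
    refine Finset.le_inf' hN _ fun j _ => ?_
    have h1 : a * m w x ≤ a * (dst x (y j) - w j) :=
      mul_le_mul_of_nonneg_left (Finset.inf'_le _ (Finset.mem_univ j)) ha
    have h2 : b * m v x ≤ b * (dst x (y j) - v j) :=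
      mul_le_mul_of_nonneg_left (Finset.inf'_le _ (Finset.mem_univ j)) hb
    have : dst x (y j) - (a • w + b • v) j
        = a * (dst x (y j) - w j) + b * (dst x (y j) - v j) := by
      simp only [Pi.add_apply, Pi.smul_apply, smul_eq_mul]
      have : a * dst x (y j) + b * dst x (y j) = dst x (y j) := by
        rw [← add_mul, hab, one_mul]
      nlinarith [this]
    rw [this]
    exact add_le_add h1 h2
  have hIw : IntegrableOn (fun x => m w x * ρ x) Ω := hint _ (hmcont w)
  have hIv : IntegrableOn (fun x => m v x * ρ x) Ω := hint _ (hmcont v)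
  have hIwv : IntegrableOn (fun x => m (a • w + b • v) x * ρ x) Ω :=
    hint _ (hmcont (a • w + b • v))
  have hIcomb : IntegrableOn (fun x => (a * m w x + b * m v x) * ρ x) Ω := by
    have h := ((hIw.const_mul a).add (hIv.const_mul b))
    exact h.congr (Filter.Eventually.of_forall fun x => by simp; ring)
  have hmono : (∫ x in Ω, (a * m w x + b * m v x) * ρ x)
      ≤ ∫ x in Ω, m (a • w + b • v) x * ρ x := by
    refine setIntegral_mono_on hIcomb hIwv hΩm fun x _ => ?_
    exact mul_le_mul_of_nonneg_right (hpt x) (hρ0 x)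
  have hsplit : (∫ x in Ω, (a * m w x + b * m v x) * ρ x)
      = a * (∫ x in Ω, m w x * ρ x) + b * (∫ x in Ω, m v x * ρ x) := by
    rw [← integral_const_mul, ← integral_const_mul,
      ← integral_add ((hIw.const_mul a)) ((hIv.const_mul b))]
    refine setIntegral_congr_fun hΩm fun x _ => ?_
    ring
  have := hsplit ▸ hmono
  rw [hlin]
  linarith
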